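/- Let H be a real symmetric n×n matrix with H_{ij} ≤ 0 for all i ≠ j, and suppose H is irreducible (for every i, j there exists N ≥ 1 with (H^N)_{ij} ≠ 0). Then the lowest eigenvalue of H is simple and there is a corresponding eigenvector with all entries strictly positive. -/

import Mathlib

open Matrix RealInnerProductSpace

section Aux

variable {ι : Type*} [Fintype ι] [DecidableEq ι] [Nonempty ι]

lemma stmt9_sum_dot {κ : Type*} (s : Finset κ) (f : κ → ι → ℝ) (x : ι → ℝ) :
    (∑ k ∈ s, f k) ⬝ᵥ x = ∑ k ∈ s, f k ⬝ᵥ x := by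
  simp only [dotProduct, Finset.sum_apply, Finset.sum_mul]
  exact Finset.sum_comm

lemma stmt9_dot_sum {κ : Type*} (s : Finset κ) (f : κ → ι → ℝ) (x : ι → ℝ) :
    x ⬝ᵥ (∑ k ∈ s, f k) = ∑ k ∈ s, x ⬝ᵥ f k := by
  simp only [dotProduct, Finset.sum_apply, Finset.mul_sum]
  exact Finset.sum_comm

/-- Core spectral facts: a minimal eigenvalue with Rayleigh quotient lower bound
and the equality case. -/
lemma stmt9_spectral_core (H : Matrix ι ι ℝ) (hH : H.IsHermitian) :
    ∃ μ : ℝ, (∃ w0 : ι → ℝ, w0 ≠ 0 ∧ H.mulVec w0 = μ • w0) ∧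
      (∀ x : ι → ℝ, μ * (x ⬝ᵥ x) ≤ x ⬝ᵥ H.mulVec x) ∧
      (∀ x : ι → ℝ, x ⬝ᵥ H.mulVec x = μ * (x ⬝ᵥ x) → H.mulVec x = μ • x) := by
  set B := hH.eigenvectorBasis with hB
  set lam := hH.eigenvalues with hlam
  -- expansion of an arbitrary vector in the eigenbasis
  have hexp : ∀ x : ι → ℝ, x = ∑ k, (⇑(B k) ⬝ᵥ x) • ⇑(B k) := by
    intro x
    have h := B.sum_repr' (WithLp.toLp 2 x : EuclideanSpace ℝ ι)
    have h3 : ∀ k, ⟪B k, (WithLp.toLp 2 x : EuclideanSpace ℝ ι)⟫ = ⇑(B k) ⬝ᵥ x := by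
      intro k; rw [PiLp.inner_apply]; simp [dotProduct, RCLike.inner_apply, mul_comm]
    funext i
    have h4 := congrArg (fun y : EuclideanSpace ℝ ι => y.ofLp i) h
    simp only [WithLp.ofLp_sum, WithLp.ofLp_smul, Finset.sum_apply, Pi.smul_apply, h3, smul_eq_mul] at h4
    rw [Finset.sum_apply]
    simp only [Pi.smul_apply, smul_eq_mul]
    rw [← h4]
  -- the minimal eigenvalue
  obtain ⟨k0, -, hk0⟩ := Finset.exists_mem_eq_inf' (Finset.univ_nonempty (α := ι)) lam
  set μ := Finset.univ.inf' Finset.univ_nonempty lam with hμ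
  have hmin : ∀ k, μ ≤ lam k := fun k => Finset.inf'_le _ (Finset.mem_univ k)
  have heig : ∀ k, H.mulVec ⇑(B k) = lam k • ⇑(B k) := fun k =>
    hH.mulVec_eigenvectorBasis k
  -- key expansions
  have hdot : ∀ x : ι → ℝ, x ⬝ᵥ x = ∑ k, (⇑(B k) ⬝ᵥ x) ^ 2 := by
    intro x
    nth_rewrite 1 [hexp x]
    rw [stmt9_sum_dot]
    exact Finset.sum_congr rfl fun k _ => by
      rw [smul_dotProduct, smul_eq_mul, sq]
  have hmv : ∀ x : ι → ℝ, H.mulVec x = ∑ k, ((⇑(B k) ⬝ᵥ x) * lam k) • ⇑(B k) := by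
    intro x
    nth_rewrite 1 [hexp x]
    rw [show H.mulVec (∑ k, (⇑(B k) ⬝ᵥ x) • ⇑(B k)) =
        ∑ k, H.mulVec ((⇑(B k) ⬝ᵥ x) • ⇑(B k)) from map_sum H.mulVecLin _ _]
    refine Finset.sum_congr rfl fun k _ => ?_
    rw [Matrix.mulVec_smul, heig k, smul_smul, mul_comm]
  have hquad : ∀ x : ι → ℝ, x ⬝ᵥ H.mulVec x = ∑ k, lam k * (⇑(B k) ⬝ᵥ x) ^ 2 := by
    intro x
    rw [hmv x, stmt9_dot_sum]
    refine Finset.sum_congr rfl fun k _ => ?_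
    rw [dotProduct_smul, smul_eq_mul,
      show x ⬝ᵥ ⇑(B k) = ⇑(B k) ⬝ᵥ x from dotProduct_comm _ _]
    ring
  refine ⟨μ, ⟨⇑(B k0), ?_, by rw [heig k0, hk0]⟩, ?_, ?_⟩
  · intro h0
    exact B.orthonormal.ne_zero k0 (by ext i; exact congrFun h0 i)
  · intro x
    rw [hquad x, hdot x, Finset.mul_sum]
    exact Finset.sum_le_sum fun k _ =>
      mul_le_mul_of_nonneg_right (hmin k) (sq_nonneg _)
  · intro x hx
    have hzero : ∀ k ∈ Finset.univ, (lam k - μ) * (⇑(B k) ⬝ᵥ x) ^ 2 = 0 := by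
      have hsum : ∑ k, (lam k - μ) * (⇑(B k) ⬝ᵥ x) ^ 2 = 0 := by
        have h := hx
        rw [hquad x, hdot x, Finset.mul_sum] at h
        simp only [sub_mul, Finset.sum_sub_distrib]
        rw [h]; ring
      exact (Finset.sum_eq_zero_iff_of_nonneg fun k _ =>
        mul_nonneg (sub_nonneg.2 (hmin k)) (sq_nonneg _)).1 hsum
    have hterm : ∀ k, (⇑(B k) ⬝ᵥ x) * lam k = μ * (⇑(B k) ⬝ᵥ x) := by
      intro k
      rcases mul_eq_zero.1 (hzero k (Finset.mem_univ k)) with h | h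
      · rw [sub_eq_zero] at h; rw [h]; ring
      · rw [pow_eq_zero_iff (two_ne_zero)] at h
        rw [h]; ring
    rw [hmv x]
    conv_rhs => rw [hexp x]
    rw [Finset.smul_sum]
    exact Finset.sum_congr rfl fun k _ => by rw [hterm k, smul_smul]

/-- Absolute value of an eigenvector of the minimal eigenvalue is again an
eigenvector, when off-diagonal entries are nonpositive. -/
lemma stmt9_abs_eig (H : Matrix ι ι ℝ)
    (hoff : ∀ i j, i ≠ j → H i j ≤ 0) (μ : ℝ)
    (hray : ∀ x : ι → ℝ, μ * (x ⬝ᵥ x) ≤ x ⬝ᵥ H.mulVec x)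
    (heqc : ∀ x : ι → ℝ, x ⬝ᵥ H.mulVec x = μ * (x ⬝ᵥ x) → H.mulVec x = μ • x)
    (u : ι → ℝ) (hu : H.mulVec u = μ • u) :
    H.mulVec (fun i => |u i|) = μ • (fun i => |u i|) := by
  set au : ι → ℝ := fun i => |u i| with hau
  have hdots : au ⬝ᵥ au = u ⬝ᵥ u := by
    simp [dotProduct, hau, abs_mul_abs_self]
  have hquadu : u ⬝ᵥ H.mulVec u = μ * (u ⬝ᵥ u) := by
    rw [hu, dotProduct_smul]; simp [smul_eq_mul]
  have hle : au ⬝ᵥ H.mulVec au ≤ u ⬝ᵥ H.mulVec u := by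
    simp only [dotProduct, Matrix.mulVec, Finset.mul_sum]
    refine Finset.sum_le_sum fun i _ => Finset.sum_le_sum fun j _ => ?_
    rcases eq_or_ne i j with rfl | hij
    · simp only [hau]
      rw [show |u i| * (H i i * |u i|) = H i i * (|u i| * |u i|) by ring,
        abs_mul_abs_self]
      exact le_of_eq (by ring)
    · simp only [hau]
      rw [show |u i| * (H i j * |u j|) = H i j * (|u i| * |u j|) by ring,
        show u i * (H i j * u j) = H i j * (u i * u j) by ring, ← abs_mul]
      exact mul_le_mul_of_nonpos_left (le_abs_self _) (hoff i j hij)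
  apply heqc
  have h2 : au ⬝ᵥ H.mulVec au ≤ μ * (au ⬝ᵥ au) := by
    rw [hdots, ← hquadu]; exact hle
  have h1 : μ * (au ⬝ᵥ au) ≤ au ⬝ᵥ H.mulVec au := hray au
  linarith

/-- A nonnegative, nonzero eigenvector of an irreducible matrix with
nonpositive off-diagonal entries is strictly positive. -/
lemma stmt9_pos (H : Matrix ι ι ℝ)
    (hoff : ∀ i j, i ≠ j → H i j ≤ 0)
    (hirr : ∀ i j, ∃ N : ℕ, 1 ≤ N ∧ (H ^ N) i j ≠ 0)
    (μ : ℝ) (u : ι → ℝ) (hu0 : ∀ i, 0 ≤ u i) (hune : u ≠ 0)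
    (hu : H.mulVec u = μ • u) : ∀ i, 0 < u i := by
  set c : ℝ := |μ| + 1 + 2 * ∑ k, |H k k| with hc
  have hsum_nonneg : (0:ℝ) ≤ ∑ k, |H k k| :=
    Finset.sum_nonneg fun k _ => abs_nonneg _
  have hdiag : ∀ k, |H k k| ≤ ∑ j, |H j j| := fun k =>
    Finset.single_le_sum (fun j _ => abs_nonneg (H j j)) (Finset.mem_univ k)
  set M : Matrix ι ι ℝ := c • (1 : Matrix ι ι ℝ) - H with hM
  have hMabs : ∀ i j, |H i j| ≤ M i j := by
    intro i j
    rcases eq_or_ne i j with rfl | hij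
    · have hMii : M i i = c - H i i := by simp [hM, Matrix.one_apply]
      rw [hMii]
      have h1 : |H i i| ≤ ∑ k, |H k k| := hdiag i
      have h2 : -(∑ k, |H k k|) ≤ H i i := by
        have := neg_abs_le (H i i); linarith
      have := abs_nonneg μ
      rw [hc]
      rcases abs_cases (H i i) with ⟨he, -⟩ | ⟨he, -⟩ <;> rw [he] <;> linarith
    · have hMij : M i j = -H i j := by simp [hM, Matrix.one_apply, hij]
      rw [hMij, abs_of_nonpos (hoff i j hij)]
  have hMpow : ∀ N : ℕ, ∀ i j, |(H ^ N) i j| ≤ (M ^ N) i j := by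
    intro N
    induction N with
    | zero =>
      intro i j
      simp only [pow_zero, Matrix.one_apply]
      split <;> simp
    | succ N ih =>
      intro i j
      rw [pow_succ, pow_succ, Matrix.mul_apply, Matrix.mul_apply]
      calc |∑ k, (H ^ N) i k * H k j| ≤ ∑ k, |(H ^ N) i k * H k j| :=
            Finset.abs_sum_le_sum_abs _ _
        _ ≤ ∑ k, (M ^ N) i k * M k j := by
            refine Finset.sum_le_sum fun k _ => ?_
            rw [abs_mul]
            exact mul_le_mul (ih i k) (hMabs k j) (abs_nonneg _)
              (le_trans (abs_nonneg _) (ih i k))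
  have hMpow_nonneg : ∀ N : ℕ, ∀ i j, 0 ≤ (M ^ N) i j := fun N i j =>
    le_trans (abs_nonneg _) (hMpow N i j)
  have hcμ : 0 < c - μ := by
    have := le_abs_self μ; rw [hc]; linarith
  have hMu : M.mulVec u = (c - μ) • u := by
    rw [hM, Matrix.sub_mulVec, Matrix.smul_mulVec, Matrix.one_mulVec, hu,
      sub_smul]
  have hMNu : ∀ N : ℕ, (M ^ N).mulVec u = ((c - μ) ^ N) • u := by
    intro N
    induction N with
    | zero => simp [Matrix.one_mulVec]
    | succ N ih =>
      rw [pow_succ, pow_succ, ← Matrix.mulVec_mulVec, hMu, Matrix.mulVec_smul, ih,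
        smul_smul, mul_comm]
  -- find a positive entry of u
  have hj : ∃ j, 0 < u j := by
    by_contra h
    push_neg at h
    exact hune (funext fun i => le_antisymm (h i) (hu0 i))
  obtain ⟨j, hj⟩ := hj
  intro i
  obtain ⟨N, hN1, hNne⟩ := hirr i j
  have hMNij : 0 < (M ^ N) i j :=
    lt_of_lt_of_le (abs_pos.2 hNne) (hMpow N i j)
  have hval := congrFun (hMNu N) i
  simp only [Matrix.mulVec, dotProduct, Pi.smul_apply, smul_eq_mul] at hval
  have hpos : 0 < ∑ k, (M ^ N) i k * u k := by
    refine Finset.sum_pos' (fun k _ => mul_nonneg (hMpow_nonneg N i k) (hu0 k))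
      ⟨j, Finset.mem_univ j, mul_pos hMNij hj⟩
  rw [hval] at hpos
  have hcn : 0 < (c - μ) ^ N := pow_pos hcμ N
  nlinarith

end Aux

/-- Perron–Frobenius-type theorem: a real symmetric matrix `H` with nonpositive
off-diagonal entries which is irreducible (for all `i j` some power has
`(H^N) i j ≠ 0`) has a simple lowest eigenvalue `μ` with a strictly positive
eigenvector `v`. -/
theorem stmt9 {ι : Type*} [Fintype ι] [DecidableEq ι] [Nonempty ι]
    (H : Matrix ι ι ℝ) (hsym : H.IsSymm)
    (hoff : ∀ i j, i ≠ j → H i j ≤ 0)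
    (hirr : ∀ i j, ∃ N : ℕ, 1 ≤ N ∧ (H ^ N) i j ≠ 0) :
    ∃ (μ : ℝ) (v : ι → ℝ),
      (∀ i, 0 < v i) ∧ H.mulVec v = μ • v ∧
      (∀ (ν : ℝ) (w : ι → ℝ), w ≠ 0 → H.mulVec w = ν • w → μ ≤ ν) ∧
      (∀ w : ι → ℝ, H.mulVec w = μ • w → ∃ a : ℝ, w = a • v) := by
  have hH : H.IsHermitian := by
    rw [Matrix.IsHermitian, Matrix.conjTranspose]
    exact Matrix.isHermitian_iff_isSymm.2 hsym
  obtain ⟨μ, ⟨w0, hw0ne, hw0eig⟩, hray, heqc⟩ := stmt9_spectral_core H hH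
  set v : ι → ℝ := fun i => |w0 i| with hv
  have hveig : H.mulVec v = μ • v := stmt9_abs_eig H hoff μ hray heqc w0 hw0eig
  have hvne : v ≠ 0 := by
    intro h0
    apply hw0ne
    funext i
    have := congrFun h0 i
    simpa [hv, abs_eq_zero] using this
  have hvpos : ∀ i, 0 < v i :=
    stmt9_pos H hoff hirr μ v (fun i => abs_nonneg _) hvne hveig
  refine ⟨μ, v, hvpos, hveig, ?_, ?_⟩
  · intro ν w hwne hweig
    have h1 : μ * (w ⬝ᵥ w) ≤ w ⬝ᵥ H.mulVec w := hray w
    have h2 : w ⬝ᵥ H.mulVec w = ν * (w ⬝ᵥ w) := by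
      rw [hweig, dotProduct_smul]; simp [smul_eq_mul]
    have h3 : 0 < w ⬝ᵥ w := by
      obtain ⟨i, hi⟩ := Function.ne_iff.1 hwne
      refine Finset.sum_pos' (fun k _ => mul_self_nonneg (w k))
        ⟨i, Finset.mem_univ i, ?_⟩
      exact mul_self_pos.2 (by simpa using hi)
    nlinarith
  · intro w hweig
    have i0 : ι := Classical.arbitrary ι
    set a : ℝ := w i0 / v i0 with ha
    set w' : ι → ℝ := w - a • v with hw'
    have hw'eig : H.mulVec w' = μ • w' := by
      rw [hw', Matrix.mulVec_sub, Matrix.mulVec_smul, hweig, hveig, smul_smul,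
        smul_sub, smul_smul, mul_comm]
    have hw'0 : w' i0 = 0 := by
      have hvne0 : v i0 ≠ 0 := ne_of_gt (hvpos i0)
      simp only [hw', Pi.sub_apply, Pi.smul_apply, smul_eq_mul, ha]
      field_simp
      ring
    have hzero : w' = 0 := by
      by_contra hne
      have habsne : (fun i => |w' i|) ≠ 0 := by
        intro h0
        apply hne
        funext i
        have := congrFun h0 i
        simpa [abs_eq_zero] using this
      have h := stmt9_pos H hoff hirr μ (fun i => |w' i|) (fun i => abs_nonneg _)
        habsne (stmt9_abs_eig H hoff μ hray heqc w' hw'eig)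
      have hcontr := h i0
      simp only [hw'0, abs_zero] at hcontr
      exact lt_irrefl 0 hcontr
    refine ⟨a, ?_⟩
    have h0 : w - a • v = 0 := by rw [← hw']; exact hzero
    exact sub_eq_zero.1 h0
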